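/- If F is an undirected Fitch graph, then F does not contain the disjoint union K_1 ∪ K_2 as an induced subgraph; equivalently, for any three pairwise distinct vertices x, y, z of F, if x and y are adjacent in F, then z is adjacent to x or z is adjacent to y. -/

import Mathlib

open SimpleGraph

/-- A leaf of a graph is a vertex with exactly one neighbour (i.e. a vertex of degree 1). -/
def SimpleGraph.IsLeaf {V : Type*} (T : SimpleGraph V) (v : V) : Prop :=
  ∃! u, T.Adj v u

/-- The undirected Fitch graph explained by an edge-labelled tree `(T, lam)`
(labels: `true` = 1, `false` = 0): its vertices are the leaves of `T`, and two
distinct leaves are adjacent iff the (unique) path between them in `T` contains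
at least one edge labelled `1`. -/
def fitchGraph {V : Type*} (T : SimpleGraph V) (lam : Sym2 V → Bool) :
    SimpleGraph {v : V // T.IsLeaf v} where
  Adj x y := x ≠ y ∧ ∃ p : T.Walk x.1 y.1, p.IsPath ∧ ∃ e ∈ p.edges, lam e = true
  symm := by
    constructor
    rintro x y ⟨hxy, p, hp, e, he, hl⟩
    exact ⟨hxy.symm, p.reverse, hp.reverse, e, by
      rw [SimpleGraph.Walk.edges_reverse]; exact List.mem_reverse.mpr he, hl⟩
  loopless := by constructor; rintro x ⟨hx, -⟩; exact hx rfl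

/-- A graph is an undirected Fitch graph if it is isomorphic to the Fitch graph
explained by some edge-labelled finite tree. -/
def IsFitchGraph {W : Type*} (G : SimpleGraph W) : Prop :=
  ∃ (V : Type) (T : SimpleGraph V) (lam : Sym2 V → Bool),
    Finite V ∧ T.IsTree ∧ Nonempty (G ≃g fitchGraph T lam)

/-- In a tree, every edge of the path from `x` to `y` lies on the path from `z` to `x`
or on the path from `z` to `y`. -/
lemma tree_edge_split {V : Type*} {T : SimpleGraph V} (hT : T.IsTree) {x y z : V}
    (p : T.Walk x y) (hp : p.IsPath) {e : Sym2 V} (he : e ∈ p.edges)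
    {q : T.Walk z x} {r : T.Walk z y} (hq : q.IsPath) (hr : r.IsPath) :
    e ∈ q.edges ∨ e ∈ r.edges := by
  classical
  set w : T.Walk x y := q.reverse.append r with hw
  have hbp : w.bypass = p := by
    have h1 := (hT.existsUnique_path x y).unique w.bypass_isPath hp
    exact h1
  have hew : e ∈ w.edges := hbp ▸ he |> (fun h => SimpleGraph.Walk.edges_bypass_subset w (hbp ▸ he))
  rw [hw, SimpleGraph.Walk.edges_append, List.mem_append] at hew
  rcases hew with h | h
  · rw [SimpleGraph.Walk.edges_reverse, List.mem_reverse] at h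
    exact Or.inl h
  · exact Or.inr h

/-- an undirected Fitch graph contains no induced `K₁ ∪ K₂`:
for any three pairwise distinct vertices `x, y, z`, if `x` and `y` are adjacent,
then `z` is adjacent to `x` or to `y`. -/
theorem fitch_no_induced_K1_union_K2 {W : Type*} (G : SimpleGraph W)
    (hG : IsFitchGraph G) :
    ∀ x y z : W, x ≠ y → x ≠ z → y ≠ z → G.Adj x y → G.Adj z x ∨ G.Adj z y := by
  obtain ⟨V, T, lam, _, hT, ⟨f⟩⟩ := hG
  intro x y z _ hxz hyz hxy
  have hadj : (fitchGraph T lam).Adj (f x) (f y) := f.map_adj_iff.mpr hxy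
  obtain ⟨-, p, hp, e, he, hl⟩ := hadj
  -- paths from z to x and z to y
  obtain ⟨q⟩ := (hT.isConnected.preconnected (f z).1 (f x).1)
  obtain ⟨r⟩ := (hT.isConnected.preconnected (f z).1 (f y).1)
  classical
  have hsplit := tree_edge_split hT (z := (f z).1) p hp he q.toPath.2 r.toPath.2
  have hfzx : f z ≠ f x := fun h => hxz (f.injective h.symm)
  have hfzy : f z ≠ f y := fun h => hyz (f.injective h.symm)
  rcases hsplit with h | h
  · exact Or.inl (f.map_adj_iff.mp ⟨hfzx, q.toPath.1, q.toPath.2, e, h, hl⟩)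
  · exact Or.inr (f.map_adj_iff.mp ⟨hfzy, r.toPath.1, r.toPath.2, e, h, hl⟩)
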